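/- Let ω be a finite positive Borel measure on [0,1) with ω̂ doubling. Then the moments ω_x = ∫₀¹ r^x dω(r) satisfy ω_x ≍ ω̂(1 - 1/x) for all x ∈ [1,∞), i.e. there exist constants c, C > 0 with c·ω̂(1-1/x) ≤ ∫₀¹ r^x dω(r) ≤ C·ω̂(1-1/x) for all x ≥ 1. -/

import Mathlib

open MeasureTheory Set Real Filter

private lemma intg_aux (ω : Measure ℝ) [IsFiniteMeasure ω] {x : ℝ} (hx : 0 ≤ x) :
    IntegrableOn (fun r : ℝ => r ^ x) (Ico (0:ℝ) 1) ω := by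
  apply Integrable.mono' (integrable_const (1:ℝ))
  · exact ((Real.continuous_rpow_const hx).measurable).aestronglyMeasurable
  · filter_upwards [ae_restrict_mem measurableSet_Ico] with r hr
    rw [Real.norm_eq_abs, abs_of_nonneg (Real.rpow_nonneg hr.1 x)]
    exact Real.rpow_le_one hr.1 hr.2.le hx

private lemma chain_aux (ω : Measure ℝ) [IsFiniteMeasure ω] {C₀ : ℝ} (hC₀ : 1 ≤ C₀)
    (hdoub : ∀ r : ℝ, 0 ≤ r → r < 1 →
      (ω (Ico r 1)).toReal ≤ C₀ * (ω (Ico ((1 + r) / 2) 1)).toReal)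
    (hcero : (ω (Ico (0 : ℝ) 1)).toReal ≤ C₀ * (ω (Ico (1 / 2 : ℝ) 1)).toReal)
    {x : ℝ} (hx : 1 ≤ x) :
    ∀ n : ℕ, (ω (Ico (max 0 (1 - 2^n/x)) 1)).toReal
      ≤ C₀^n * (ω (Ico (1 - 1/x) 1)).toReal := by
  have hx0 : (0:ℝ) < x := lt_of_lt_of_le one_pos hx
  have hC₀0 : (0:ℝ) < C₀ := lt_of_lt_of_le one_pos hC₀
  have h1x : 1/x ≤ 1 := by rw [div_le_one hx0]; exact hx
  have hmono : ∀ s t : Set ℝ, s ⊆ t → (ω s).toReal ≤ (ω t).toReal :=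
    fun s t h => ENNReal.toReal_mono (measure_ne_top ω t) (measure_mono h)
  intro n
  induction n with
  | zero =>
    rw [pow_zero, pow_zero, one_mul, max_eq_right (by linarith : (0:ℝ) ≤ 1 - 1/x)]
  | succ n ih =>
    rcases le_or_gt 0 (1 - 2^(n+1)/x) with h | h
    · have hstep : (2:ℝ)^n ≤ 2^(n+1) := by
        rw [pow_succ]
        nlinarith [pow_nonneg (by norm_num : (0:ℝ) ≤ 2) n]
      have hb : (0:ℝ) ≤ 1 - 2^n/x := by
        have h2 : (2:ℝ)^n/x ≤ 2^(n+1)/x := by gcongr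
        linarith
      have key := hdoub (1 - 2^(n+1)/x) h (by
        have : (0:ℝ) < 2^(n+1)/x := by positivity
        linarith)
      have heq : (1 + (1 - 2^(n+1)/x))/2 = 1 - 2^n/x := by
        rw [pow_succ]; field_simp; ring
      rw [heq] at key
      rw [max_eq_right h]
      calc (ω (Ico (1 - 2^(n+1)/x) 1)).toReal
          ≤ C₀ * (ω (Ico (1 - 2^n/x) 1)).toReal := key
        _ = C₀ * (ω (Ico (max 0 (1 - 2^n/x)) 1)).toReal := by rw [max_eq_right hb]
        _ ≤ C₀ * (C₀^n * (ω (Ico (1 - 1/x) 1)).toReal) :=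
            mul_le_mul_of_nonneg_left ih hC₀0.le
        _ = C₀^(n+1) * (ω (Ico (1 - 1/x) 1)).toReal := by ring
    · rw [max_eq_left h.le]
      rcases le_or_gt (1 - 2^n/x) 0 with h2 | h2
      · calc (ω (Ico (0:ℝ) 1)).toReal
            = (ω (Ico (max 0 (1 - 2^n/x)) 1)).toReal := by rw [max_eq_left h2]
          _ ≤ C₀^n * (ω (Ico (1 - 1/x) 1)).toReal := ih
          _ ≤ C₀^(n+1) * (ω (Ico (1 - 1/x) 1)).toReal := by
              apply mul_le_mul_of_nonneg_right _ ENNReal.toReal_nonneg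
              rw [pow_succ]
              nlinarith [pow_pos hC₀0 n, pow_nonneg hC₀0.le n]
      · have hb2 : 1 - 2^n/x ≤ 1/2 := by
          have h2n : (1:ℝ) < 2^(n+1)/x := by linarith
          have hxlt : x < 2^(n+1) := by rwa [lt_div_iff₀ hx0, one_mul] at h2n
          have hx2 : x/2 < 2^n := by rw [pow_succ] at hxlt; linarith
          have : (1:ℝ)/2 ≤ 2^n/x := by
            rw [div_le_div_iff₀ (by norm_num) hx0]; linarith
          linarith
        calc (ω (Ico (0:ℝ) 1)).toReal
            ≤ C₀ * (ω (Ico (1/2 : ℝ) 1)).toReal := hcero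
          _ ≤ C₀ * (ω (Ico (max 0 (1 - 2^n/x)) 1)).toReal := by
              apply mul_le_mul_of_nonneg_left _ hC₀0.le
              apply hmono
              apply Ico_subset_Ico_left
              exact max_le (by norm_num) hb2
          _ ≤ C₀ * (C₀^n * (ω (Ico (1 - 1/x) 1)).toReal) :=
              mul_le_mul_of_nonneg_left ih hC₀0.le
          _ = C₀^(n+1) * (ω (Ico (1 - 1/x) 1)).toReal := by ring

private lemma sumE_aux {C₀ : ℝ} (hC₀ : 1 ≤ C₀) :
    Summable fun k : ℕ => Real.exp (-(2^k)) * C₀^(k+1) := by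
  have hC₀0 : (0:ℝ) < C₀ := lt_of_lt_of_le one_pos hC₀
  apply summable_of_ratio_norm_eventually_le (r := 1/2) (by norm_num)
  have htend : Tendsto (fun k : ℕ => C₀ * Real.exp (-(2^k))) atTop (nhds (C₀ * 0)) := by
    apply Tendsto.const_mul
    apply Real.tendsto_exp_atBot.comp
    apply Filter.tendsto_neg_atTop_atBot.comp
    exact tendsto_pow_atTop_atTop_of_one_lt (by norm_num : (1:ℝ) < 2)
  rw [mul_zero] at htend
  filter_upwards [htend.eventually_lt_const (by norm_num : (0:ℝ) < 1/2)] with k hk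
  rw [Real.norm_eq_abs, Real.norm_eq_abs,
    abs_of_pos (by positivity), abs_of_pos (by positivity)]
  have he : Real.exp (-(2^(k+1) : ℝ)) = Real.exp (-(2^k)) * Real.exp (-(2^k)) := by
    rw [← Real.exp_add]; ring_nf
  rw [he, pow_succ]
  have h1 : (0:ℝ) < Real.exp (-(2^k)) := Real.exp_pos _
  have h2 : (0:ℝ) < C₀^(k+1) := pow_pos hC₀0 _
  calc Real.exp (-(2^k)) * Real.exp (-(2^k)) * (C₀^(k+1) * C₀)
      = (C₀ * Real.exp (-(2^k))) * (Real.exp (-(2^k)) * C₀^(k+1)) := by ring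
    _ ≤ (1/2) * (Real.exp (-(2^k)) * C₀^(k+1)) := by
        apply mul_le_mul_of_nonneg_right hk.le (by positivity)

private lemma mainUB_aux (ω : Measure ℝ) [IsFiniteMeasure ω] {C₀ : ℝ} (hC₀ : 1 ≤ C₀)
    (hdoub : ∀ r : ℝ, 0 ≤ r → r < 1 →
      (ω (Ico r 1)).toReal ≤ C₀ * (ω (Ico ((1 + r) / 2) 1)).toReal)
    (hcero : (ω (Ico (0 : ℝ) 1)).toReal ≤ C₀ * (ω (Ico (1 / 2 : ℝ) 1)).toReal)
    {x : ℝ} (hx : 1 ≤ x) :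
    ∀ n : ℕ, (∫ r in Ico (max 0 (1 - 2^n/x)) 1, r ^ x ∂ω) ≤
      (1 + ∑ k ∈ Finset.range n, Real.exp (-(2^k)) * C₀^(k+1))
        * (ω (Ico (1 - 1/x) 1)).toReal := by
  have hx0 : (0:ℝ) < x := lt_of_lt_of_le one_pos hx
  have hC₀0 : (0:ℝ) < C₀ := lt_of_lt_of_le one_pos hC₀
  have h1x : 1/x ≤ 1 := by rw [div_le_one hx0]; exact hx
  have hmono : ∀ s t : Set ℝ, s ⊆ t → (ω s).toReal ≤ (ω t).toReal :=
    fun s t h => ENNReal.toReal_mono (measure_ne_top ω t) (measure_mono h)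
  have hintg : ∀ s : Set ℝ, s ⊆ Ico (0:ℝ) 1 → IntegrableOn (fun r : ℝ => r ^ x) s ω :=
    fun s hs => (intg_aux ω (by linarith : (0:ℝ) ≤ x)).mono_set hs
  intro n
  induction n with
  | zero =>
    rw [pow_zero, max_eq_right (by linarith : (0:ℝ) ≤ 1 - 1/x)]
    simp only [Finset.range_zero, Finset.sum_empty, add_zero, one_mul]
    have hsub : Ico (1 - 1/x) 1 ⊆ Ico (0:ℝ) 1 :=
      Ico_subset_Ico_left (by linarith)
    calc (∫ r in Ico (1 - 1/x) 1, r ^ x ∂ω)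
        ≤ ∫ r in Ico (1 - 1/x) 1, (1:ℝ) ∂ω := by
          apply setIntegral_mono_on (hintg _ hsub) (integrableOn_const (measure_ne_top ω _) enorm_ne_top) measurableSet_Ico
          intro r hr
          have := hsub hr
          exact Real.rpow_le_one this.1 hr.2.le (by linarith)
      _ = (ω (Ico (1 - 1/x) 1)).toReal := by
          rw [setIntegral_const]; simp [Measure.real]
  | succ n ih =>
    set a := max 0 (1 - 2^(n+1)/x) with ha
    set b := max 0 (1 - 2^n/x) with hb
    have hstep : (2:ℝ)^n ≤ 2^(n+1) := by
      rw [pow_succ]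
      nlinarith [pow_nonneg (by norm_num : (0:ℝ) ≤ 2) n]
    have hab : a ≤ b := by
      apply max_le_max le_rfl
      have h2 : (2:ℝ)^n/x ≤ 2^(n+1)/x := by gcongr
      linarith
    have hb1 : b ≤ 1 := by
      apply max_le (by norm_num)
      have : (0:ℝ) < 2^n/x := by positivity
      linarith
    have ha0 : 0 ≤ a := le_max_left _ _
    have hsub1 : Ico a b ⊆ Ico (0:ℝ) 1 := fun r hr =>
      ⟨le_trans ha0 hr.1, lt_of_lt_of_le hr.2 hb1⟩
    have hsub2 : Ico b 1 ⊆ Ico (0:ℝ) 1 := fun r hr =>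
      ⟨le_trans (le_max_left _ _) hr.1, hr.2⟩
    have hsplit : (∫ r in Ico a 1, r ^ x ∂ω)
        = (∫ r in Ico a b, r ^ x ∂ω) + (∫ r in Ico b 1, r ^ x ∂ω) := by
      rw [← Set.Ico_union_Ico_eq_Ico hab hb1]
      exact setIntegral_union Set.Ico_disjoint_Ico_same measurableSet_Ico
        (hintg _ hsub1) (hintg _ hsub2)
    have hbound1 : (∫ r in Ico a b, r ^ x ∂ω)
        ≤ Real.exp (-(2^n)) * (ω (Ico a b)).toReal := by
      calc (∫ r in Ico a b, r ^ x ∂ω)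
          ≤ ∫ r in Ico a b, Real.exp (-(2^n)) ∂ω := by
            apply setIntegral_mono_on (hintg _ hsub1) (integrableOn_const (measure_ne_top ω _) enorm_ne_top) measurableSet_Ico
            intro r hr
            have hr0 : 0 ≤ r := le_trans ha0 hr.1
            have hbpos : 0 < b := lt_of_le_of_lt hr0 hr.2
            have hbval : b = 1 - 2^n/x := by
              rcases max_cases (0:ℝ) (1 - 2^n/x) with ⟨h1, h2⟩ | ⟨h1, h2⟩
              · rw [hb] at hbpos; rw [h1] at hbpos; exact absurd hbpos (lt_irrefl 0)
              · exact h1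
            have h2nx : (0:ℝ) ≤ 2^n/x := by positivity
            calc r ^ x ≤ b ^ x :=
                Real.rpow_le_rpow hr0 hr.2.le (by linarith)
              _ ≤ (Real.exp (-(2^n/x))) ^ x := by
                  apply Real.rpow_le_rpow hbpos.le _ (by linarith)
                  rw [hbval]
                  linarith [Real.add_one_le_exp (-(2^n/x))]
              _ = Real.exp (-(2^n)) := by
                  rw [← Real.exp_mul]
                  congr 1
                  field_simp
          _ = Real.exp (-(2^n)) * (ω (Ico a b)).toReal := by
            rw [setIntegral_const]; rw [smul_eq_mul, mul_comm]; rfl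
    have hchain := chain_aux ω hC₀ hdoub hcero hx (n+1)
    have hm : (ω (Ico a b)).toReal ≤ C₀^(n+1) * (ω (Ico (1 - 1/x) 1)).toReal := by
      refine le_trans (hmono _ (Ico a 1) ?_) hchain
      exact Ico_subset_Ico_right hb1
    calc (∫ r in Ico a 1, r ^ x ∂ω)
        = (∫ r in Ico a b, r ^ x ∂ω) + (∫ r in Ico b 1, r ^ x ∂ω) := hsplit
      _ ≤ Real.exp (-(2^n)) * (C₀^(n+1) * (ω (Ico (1 - 1/x) 1)).toReal)
          + (1 + ∑ k ∈ Finset.range n, Real.exp (-(2^k)) * C₀^(k+1))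
            * (ω (Ico (1 - 1/x) 1)).toReal := by
          apply add_le_add _ ih
          exact le_trans hbound1 (mul_le_mul_of_nonneg_left hm (Real.exp_pos _).le)
      _ = (1 + ∑ k ∈ Finset.range (n+1), Real.exp (-(2^k)) * C₀^(k+1))
            * (ω (Ico (1 - 1/x) 1)).toReal := by
          rw [Finset.sum_range_succ]; ring

theorem stmt_6 (ω : Measure ℝ) [IsFiniteMeasure ω] (C₀ : ℝ) (hC₀ : 1 ≤ C₀)
    (hdoub : ∀ r : ℝ, 0 ≤ r → r < 1 →
      (ω (Ico r 1)).toReal ≤ C₀ * (ω (Ico ((1 + r) / 2) 1)).toReal)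
    (hcero : (ω (Ico (0 : ℝ) 1)).toReal ≤ C₀ * (ω (Ico (1 / 2 : ℝ) 1)).toReal) :
    ∃ c C : ℝ, 0 < c ∧ 0 < C ∧ ∀ x : ℝ, 1 ≤ x →
      c * (ω (Ico (1 - 1 / x) 1)).toReal ≤ (∫ r in Ico (0 : ℝ) 1, r ^ x ∂ω) ∧
      (∫ r in Ico (0 : ℝ) 1, r ^ x ∂ω) ≤ C * (ω (Ico (1 - 1 / x) 1)).toReal := by
  have hC₀0 : (0:ℝ) < C₀ := lt_of_lt_of_le one_pos hC₀
  have htsum0 : 0 ≤ ∑' k : ℕ, Real.exp (-(2^k)) * C₀^(k+1) :=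
    tsum_nonneg fun i => by positivity
  refine ⟨1/(2*C₀), 1 + ∑' k : ℕ, Real.exp (-(2^k)) * C₀^(k+1),
    by positivity, by linarith, fun x hx => ?_⟩
  have hx0 : (0:ℝ) < x := lt_of_lt_of_le one_pos hx
  have h1x : 1/x ≤ 1 := by rw [div_le_one hx0]; exact hx
  have h1x0 : (0:ℝ) < 1/x := by positivity
  have hintg := intg_aux ω (by linarith : (0:ℝ) ≤ x)
  constructor
  · -- lower bound
    set y : ℝ := 1 - 1/(2*x) with hy
    have hy12 : (1:ℝ)/2 ≤ y := by
      have : 1/(2*x) ≤ 1/2 := by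
        rw [div_le_div_iff₀ (by positivity) (by norm_num)]; linarith
      rw [hy]; linarith
    have hy1 : y < 1 := by
      have : (0:ℝ) < 1/(2*x) := by positivity
      rw [hy]; linarith
    have hy0 : (0:ℝ) ≤ y := le_trans (by norm_num) hy12
    have key := hdoub (1 - 1/x) (by linarith) (by linarith)
    have heq : (1 + (1 - 1/x))/2 = y := by rw [hy]; field_simp; ring
    rw [heq] at key
    have hsub : Ico y 1 ⊆ Ico (0:ℝ) 1 := Ico_subset_Ico_left hy0
    have step3 : (1/2 : ℝ) * (ω (Ico y 1)).toReal ≤ ∫ r in Ico y 1, r ^ x ∂ω := by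
      have : (∫ r in Ico y 1, (1/2 : ℝ) ∂ω) ≤ ∫ r in Ico y 1, r ^ x ∂ω := by
        apply setIntegral_mono_on (integrableOn_const (measure_ne_top ω _) enorm_ne_top)
          (hintg.mono_set hsub) measurableSet_Ico
        intro r hr
        have hs1 : (-1:ℝ) ≤ -(1/(2*x)) := by
          have : 1/(2*x) ≤ 1/2 := by
            rw [div_le_div_iff₀ (by positivity) (by norm_num)]; linarith
          linarith
        have hber := one_add_mul_self_le_rpow_one_add hs1 hx
        have h1s : (1:ℝ) + -(1/(2*x)) = y := by rw [hy]; ring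
        have hval : (1:ℝ) + x * -(1/(2*x)) = 1/2 := by field_simp; ring
        rw [h1s, hval] at hber
        calc (1/2 : ℝ) ≤ y ^ x := hber
          _ ≤ r ^ x := Real.rpow_le_rpow hy0 hr.1 (by linarith)
      calc (1/2 : ℝ) * (ω (Ico y 1)).toReal
          = ∫ r in Ico y 1, (1/2 : ℝ) ∂ω := by rw [setIntegral_const, smul_eq_mul, mul_comm]; rfl
        _ ≤ ∫ r in Ico y 1, r ^ x ∂ω := this
    have step4 : (∫ r in Ico y 1, r ^ x ∂ω) ≤ ∫ r in Ico (0:ℝ) 1, r ^ x ∂ω := by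
      apply setIntegral_mono_set hintg
      · filter_upwards [ae_restrict_mem measurableSet_Ico] with r hr
        exact Real.rpow_nonneg hr.1 x
      · exact hsub.eventuallyLE
    calc 1/(2*C₀) * (ω (Ico (1 - 1/x) 1)).toReal
        ≤ 1/(2*C₀) * (C₀ * (ω (Ico y 1)).toReal) :=
          mul_le_mul_of_nonneg_left key (by positivity)
      _ = (1/2) * (ω (Ico y 1)).toReal := by field_simp
      _ ≤ ∫ r in Ico y 1, r ^ x ∂ω := step3
      _ ≤ ∫ r in Ico (0:ℝ) 1, r ^ x ∂ω := step4
  · -- upper bound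
    obtain ⟨n, hn⟩ := pow_unbounded_of_one_lt x (one_lt_two (α := ℝ))
    have hmax : max 0 (1 - 2^n/x) = 0 := by
      apply max_eq_left
      have : (1:ℝ) < 2^n/x := by
        rw [lt_div_iff₀ hx0, one_mul]; exact hn
      linarith
    have hub := mainUB_aux ω hC₀ hdoub hcero hx n
    rw [hmax] at hub
    refine le_trans hub ?_
    apply mul_le_mul_of_nonneg_right _ ENNReal.toReal_nonneg
    have := Summable.sum_le_tsum (Finset.range n)
      (fun i _ => by positivity : ∀ i ∉ Finset.range n,
        (0:ℝ) ≤ Real.exp (-(2^i)) * C₀^(i+1)) (sumE_aux hC₀)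
    linarith
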